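/- For every μ ∈ (0, 1), the function g : (0, ∞) → ℝ, g(ρ) = Φ(μ, ρ) − log(ρ/(μ+ρ)), is strictly decreasing on (0, μ/(e−1)]; indeed g'(ρ) = −(1−μ)((1+ρ)μ − ρ²)/(ρ(1+ρ)(1+ρ−μ)(μ+ρ)) < 0 for ρ ∈ (0, μ/(e−1)]. -/

import Mathlib

/-- The function `Φ : [0,1] × (0,∞) → ℝ` from the paper, extended by the given
formulas to all of `ℝ × ℝ`. -/
noncomputable def Phi (μ ρ : ℝ) : ℝ :=
  if μ = 0 then -1 / (1 + ρ) else (1 / μ) * Real.log (1 - μ / (1 + ρ))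

lemma g_hasDeriv (μ : ℝ) (hμ : μ ∈ Set.Ioo (0:ℝ) 1) (ρ : ℝ) (hρ : 0 < ρ) :
    HasDerivAt (fun ρ => Phi μ ρ - Real.log (ρ / (μ + ρ)))
      (-((1 - μ) * ((1 + ρ) * μ - ρ ^ 2)) /
        (ρ * (1 + ρ) * (1 + ρ - μ) * (μ + ρ))) ρ := by
  obtain ⟨hμ0, hμ1⟩ := hμ
  have h1ρ : (0:ℝ) < 1 + ρ := by linarith
  have hμρ : (0:ℝ) < μ + ρ := by linarith
  have h1ρμ : (0:ℝ) < 1 + ρ - μ := by linarith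
  have hfun : (fun ρ => Phi μ ρ - Real.log (ρ / (μ + ρ)))
      = fun x : ℝ => (1 / μ) * Real.log (1 - μ / (1 + x)) - Real.log (x / (μ + x)) := by
    funext x
    simp [Phi, hμ0.ne']
  rw [hfun]
  have h1 : HasDerivAt (fun x : ℝ => 1 + x) 1 ρ := (hasDerivAt_id ρ).const_add 1
  have hA : HasDerivAt (fun x : ℝ => 1 - μ / (1 + x)) (μ / (1 + ρ)^2) ρ := by
    have h2 := ((h1.inv h1ρ.ne').const_mul μ).const_sub 1
    refine h2.congr_deriv ?_
    symm
    field_simp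
  have hvalpos : 0 < 1 - μ / (1 + ρ) := by
    rw [sub_pos, div_lt_one h1ρ]; linarith
  have hlog1 := (hA.log hvalpos.ne').const_mul (1 / μ)
  have hB : HasDerivAt (fun x : ℝ => x / (μ + x)) (μ / (μ + ρ)^2) ρ := by
    have h3 : HasDerivAt (fun x : ℝ => μ + x) 1 ρ := (hasDerivAt_id ρ).const_add μ
    have h4 := (hasDerivAt_id ρ).div h3 hμρ.ne'
    refine h4.congr_deriv ?_
    symm
    field_simp
    simp
  have hvpos : 0 < ρ / (μ + ρ) := div_pos hρ hμρ
  have hlog2 := hB.log hvpos.ne'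
  have := hlog1.sub hlog2
  refine this.congr_deriv ?_
  symm
  rw [div_div_div_eq]
  field_simp
  ring

theorem g_strictAnti (μ : ℝ) (hμ : μ ∈ Set.Ioo (0:ℝ) 1) :
    StrictAntiOn (fun ρ => Phi μ ρ - Real.log (ρ / (μ + ρ)))
        (Set.Ioc (0:ℝ) (μ / (Real.exp 1 - 1))) ∧
      ∀ ρ ∈ Set.Ioc (0:ℝ) (μ / (Real.exp 1 - 1)),
        HasDerivAt (fun ρ => Phi μ ρ - Real.log (ρ / (μ + ρ)))
            (-((1 - μ) * ((1 + ρ) * μ - ρ ^ 2)) /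
              (ρ * (1 + ρ) * (1 + ρ - μ) * (μ + ρ))) ρ ∧
          -((1 - μ) * ((1 + ρ) * μ - ρ ^ 2)) /
              (ρ * (1 + ρ) * (1 + ρ - μ) * (μ + ρ)) < 0 := by
  have he : (1:ℝ) < Real.exp 1 - 1 := by
    have := Real.exp_one_gt_d9
    linarith
  have hderivneg : ∀ ρ ∈ Set.Ioc (0:ℝ) (μ / (Real.exp 1 - 1)),
      -((1 - μ) * ((1 + ρ) * μ - ρ ^ 2)) /
        (ρ * (1 + ρ) * (1 + ρ - μ) * (μ + ρ)) < 0 := by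
    intro ρ ⟨hρ0, hρle⟩
    obtain ⟨hμ0, hμ1⟩ := hμ
    have hρμ : ρ < μ := lt_of_le_of_lt hρle (by
      rw [div_lt_iff₀ (by linarith)]
      nlinarith)
    have hρ1 : ρ < 1 := hρμ.trans hμ1
    have hρsq : ρ ^ 2 < ρ := by nlinarith
    have hnum : 0 < (1 - μ) * ((1 + ρ) * μ - ρ ^ 2) := by
      apply mul_pos (by linarith)
      nlinarith [mul_pos hρ0 hμ0]
    have hden : 0 < ρ * (1 + ρ) * (1 + ρ - μ) * (μ + ρ) :=
      mul_pos (mul_pos (mul_pos hρ0 (by linarith)) (by linarith)) (by linarith)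
    exact div_neg_of_neg_of_pos (by linarith) hden
  refine ⟨?_, fun ρ hρ => ⟨g_hasDeriv μ hμ ρ hρ.1, hderivneg ρ hρ⟩⟩
  have hdiff : ∀ ρ ∈ Set.Ioc (0:ℝ) (μ / (Real.exp 1 - 1)),
      HasDerivAt (fun ρ => Phi μ ρ - Real.log (ρ / (μ + ρ)))
        (-((1 - μ) * ((1 + ρ) * μ - ρ ^ 2)) /
          (ρ * (1 + ρ) * (1 + ρ - μ) * (μ + ρ))) ρ :=
    fun ρ hρ => g_hasDeriv μ hμ ρ hρ.1
  apply strictAntiOn_of_deriv_neg (convex_Ioc _ _)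
  · exact fun x hx => ((hdiff x hx).continuousAt).continuousWithinAt
  · intro x hx
    rw [interior_Ioc] at hx
    have hx' : x ∈ Set.Ioc (0:ℝ) (μ / (Real.exp 1 - 1)) := ⟨hx.1, hx.2.le⟩
    rw [(hdiff x hx').deriv]
    exact hderivneg x hx'
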